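/- Assume Martin's Axiom. The union of strictly fewer than 2^ℵ₀ Lebesgue null subsets of [0,1] is Lebesgue null. -/

import Mathlib

open MeasureTheory Set Cardinal

/-- Martin's Axiom: no nonempty compact Hausdorff space with the countable chain
condition is the union of strictly fewer than continuum nowhere dense subsets. -/
def MartinsAxiom : Prop :=
  ∀ (X : Type) [TopologicalSpace X], Nonempty X → CompactSpace X → T2Space X →
    (∀ s : Set (Set X), (∀ u ∈ s, IsOpen u) → s.PairwiseDisjoint id → s.Countable) →
    ∀ (ι : Type), Cardinal.mk ι < Cardinal.continuum → ∀ f : ι → Set X,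
      (∀ i, IsNowhereDense (f i)) → (⋃ i, f i) ≠ Set.univ

noncomputable section MAProof

variable (ε : ENNReal)

/-- The amoeba poset: open sets of measure < ε. -/
def Amoeba : Type := {U : Set ℝ // IsOpen U ∧ volume U < ε}

variable {ε}

namespace Amoeba

/-- Down-closed (= open in the poset topology, stronger conditions are supersets). -/
def DC (A : Set (Amoeba ε)) : Prop := ∀ p ∈ A, ∀ r : Amoeba ε, p.1 ⊆ r.1 → r ∈ A

/-- interior-of-closure operator, order-theoretically. -/
def ro (A : Set (Amoeba ε)) : Set (Amoeba ε) :=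
  {q | ∀ r : Amoeba ε, q.1 ⊆ r.1 → ∃ s : Amoeba ε, r.1 ⊆ s.1 ∧ s ∈ A}

theorem ro_mono {A B : Set (Amoeba ε)} (h : A ⊆ B) : ro A ⊆ ro B := by
  intro q hq r hr
  obtain ⟨s, hs1, hs2⟩ := hq r hr
  exact ⟨s, hs1, h hs2⟩

theorem dc_ro (A : Set (Amoeba ε)) : DC (ro A) := by
  intro p hp r hr r' hr'
  exact hp r' (hr.trans hr')

theorem subset_ro {A : Set (Amoeba ε)} (h : DC A) : A ⊆ ro A := by
  intro q hq r hr
  exact ⟨r, subset_rfl, h q hq r hr⟩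

theorem ro_idem {A : Set (Amoeba ε)} (h : DC A) : ro (ro A) = ro A := by
  apply Set.Subset.antisymm
  · intro q hq r hr
    obtain ⟨s, hs1, hs2⟩ := hq r hr
    obtain ⟨t, ht1, ht2⟩ := hs2 s subset_rfl
    exact ⟨t, hs1.trans ht1, ht2⟩
  · exact subset_ro (dc_ro A)

theorem ro_inter {A B : Set (Amoeba ε)} (hA : DC A) (hB : DC B) :
    ro (A ∩ B) = ro A ∩ ro B := by
  apply Set.Subset.antisymm
  · exact subset_inter (ro_mono inter_subset_left) (ro_mono inter_subset_right)
  · rintro q ⟨hqA, hqB⟩ r hr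
    obtain ⟨s1, hs1, hs1A⟩ := hqA r hr
    obtain ⟨s2, hs2, hs2B⟩ := hqB s1 (hr.trans hs1)
    exact ⟨s2, hs1.trans hs2, hA s1 hs1A s2 hs2, hs2B⟩

theorem ro_empty : ro (∅ : Set (Amoeba ε)) = ∅ := by
  ext q; simp only [ro, mem_setOf_eq, mem_empty_iff_false, iff_false]
  intro h
  obtain ⟨s, -, hs⟩ := h q subset_rfl
  exact hs

theorem ro_univ : ro (Set.univ : Set (Amoeba ε)) = Set.univ := by
  ext q; simp only [ro, mem_setOf_eq, Set.mem_univ, iff_true]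
  exact fun r hr => ⟨r, subset_rfl, trivial⟩

/-- pseudo-complement: interior of the complement. -/
def star (A : Set (Amoeba ε)) : Set (Amoeba ε) :=
  {q | ∀ r : Amoeba ε, q.1 ⊆ r.1 → r ∉ A}

theorem dc_star (A : Set (Amoeba ε)) : DC (star A) :=
  fun p hp r hr r' hr' => hp r' (hr.trans hr')

theorem ro_star {A : Set (Amoeba ε)} (hA : DC A) : ro (star A) = star A := by
  apply Set.Subset.antisymm
  · intro q hq r hr hrA
    obtain ⟨s, hs1, hs2⟩ := hq r hr
    exact hs2 s subset_rfl (hA r hrA s hs1)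
  · exact subset_ro (dc_star A)

theorem inter_star (A : Set (Amoeba ε)) : A ∩ star A = ∅ := by
  ext q; simp only [mem_inter_iff, mem_empty_iff_false, iff_false, not_and]
  intro hq hq'
  exact hq' q subset_rfl hq

theorem nonempty_of_ro {A : Set (Amoeba ε)} (h : (ro A).Nonempty) : A.Nonempty := by
  obtain ⟨q, hq⟩ := h
  obtain ⟨s, -, hs⟩ := hq q subset_rfl
  exact ⟨s, hs⟩

theorem dc_of_reg {A : Set (Amoeba ε)} (h : ro A = A) : DC A := h ▸ dc_ro A

end Amoeba

/-- The regular-open algebra elements. -/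
def RO (ε : ENNReal) : Type := {A : Set (Amoeba ε) // Amoeba.ro A = A}

namespace RO

def top : RO ε := ⟨Set.univ, Amoeba.ro_univ⟩
def bot : RO ε := ⟨∅, Amoeba.ro_empty⟩

def meet (a b : RO ε) : RO ε :=
  ⟨a.1 ∩ b.1, by
    rw [Amoeba.ro_inter (Amoeba.dc_of_reg a.2) (Amoeba.dc_of_reg b.2), a.2, b.2]⟩

def compl (a : RO ε) : RO ε :=
  ⟨Amoeba.star a.1, Amoeba.ro_star (Amoeba.dc_of_reg a.2)⟩

theorem bot_eq_meet_top_compl : (bot : RO ε) = meet top (compl top) := by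
  apply Subtype.ext
  show (∅ : Set (Amoeba ε)) = Set.univ ∩ Amoeba.star Set.univ
  rw [Set.univ_inter]
  ext q
  simp only [Amoeba.star, mem_setOf_eq, mem_empty_iff_false, false_iff, not_forall]
  exact ⟨q, subset_rfl, fun h => h trivial⟩

end RO

/-- The Stone-like space: lattice "ultrafilters" as boolean-valued functions. -/
def Xset (ε : ENNReal) : Set (RO ε → Bool) :=
  {x | x RO.top = true ∧ (∀ a b, x (RO.meet a b) = (x a && x b)) ∧
       (∀ a, x (RO.compl a) = !(x a))}

namespace Xset

variable {x : RO ε → Bool}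

theorem bot_false (hx : x ∈ Xset ε) : x RO.bot = false := by
  rw [RO.bot_eq_meet_top_compl, hx.2.1, hx.2.2, hx.1]
  rfl

theorem mono (hx : x ∈ Xset ε) {a b : RO ε} (hab : a.1 ⊆ b.1) (ha : x a = true) :
    x b = true := by
  have : RO.meet a b = a := Subtype.ext (Set.inter_eq_left.mpr hab)
  have h2 := hx.2.1 a b
  rw [this, ha] at h2
  exact (Bool.and_eq_true _ _ ▸ h2.symm).2

theorem nonempty_of_true (hx : x ∈ Xset ε) {a : RO ε} (ha : x a = true) :
    a.1.Nonempty := by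
  by_contra h
  rw [Set.not_nonempty_iff_eq_empty] at h
  have : a = RO.bot := Subtype.ext h
  rw [this, bot_false hx] at ha
  exact Bool.false_ne_true ha

end Xset

/-- Ultrafilter existence: every nonempty regular open set lies in some ultrafilter. -/
theorem exists_ultra (b : RO ε) (hb : b.1.Nonempty) :
    ∃ x ∈ Xset ε, x b = true := by
  -- filters: sets of RO's containing b? no: containing b, all nonempty, closed under meet, upward
  classical
  set S : Set (Set (RO ε)) :=
    {F | b ∈ F ∧ (∀ a ∈ F, (a : RO ε).1.Nonempty) ∧
         (∀ a ∈ F, ∀ c ∈ F, RO.meet a c ∈ F) ∧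
         (∀ a ∈ F, ∀ c : RO ε, a.1 ⊆ c.1 → c ∈ F)} with hS
  have hF0 : {c : RO ε | b.1 ⊆ c.1} ∈ S := by
    refine ⟨show b.1 ⊆ b.1 from subset_rfl, fun a ha => hb.mono ha, ?_, ?_⟩
    · intro a ha c hc
      exact Set.subset_inter ha hc
    · intro a ha c hc
      exact ha.trans hc
  have hzorn : ∀ c ⊆ S, IsChain (· ⊆ ·) c → c.Nonempty →
      ∃ ub ∈ S, ∀ s ∈ c, s ⊆ ub := by
    intro c hc hchain hcne
    refine ⟨⋃₀ c, ?_, fun s hs => subset_sUnion_of_mem hs⟩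
    obtain ⟨F0, hF0c⟩ := hcne
    refine ⟨⟨F0, hF0c, (hc hF0c).1⟩, ?_, ?_, ?_⟩
    · rintro a ⟨F, hF, haF⟩
      exact (hc hF).2.1 a haF
    · rintro a ⟨F, hF, haF⟩ d ⟨G, hG, hdG⟩
      rcases hchain.total hF hG with h | h
      · exact ⟨G, hG, (hc hG).2.2.1 a (h haF) d hdG⟩
      · exact ⟨F, hF, (hc hF).2.2.1 a haF d (h hdG)⟩
    · rintro a ⟨F, hF, haF⟩ d hd
      exact ⟨F, hF, (hc hF).2.2.2 a haF d hd⟩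
  obtain ⟨M, hM0, hMmax⟩ := zorn_subset_nonempty S hzorn _ hF0
  have hMS : M ∈ S := hMmax.prop
  -- M is an ultrafilter
  set x : RO ε → Bool := fun a => decide (a ∈ M) with hxdef
  have hmem : ∀ a : RO ε, x a = true ↔ a ∈ M := by
    intro a; simp [hxdef]
  have htopM : RO.top ∈ M := hMS.2.2.2 b hMS.1 RO.top (Set.subset_univ _)
  have hcomplM : ∀ a : RO ε, a ∉ M → RO.compl a ∈ M := by
    intro a haM
    by_cases hcase : ∀ d ∈ M, ((d : RO ε).1 ∩ a.1).Nonempty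
    · -- extend M by a, contradicting maximality
      exfalso
      set M' : Set (RO ε) := {e | ∃ d ∈ M, (d : RO ε).1 ∩ a.1 ⊆ e.1} with hM'
      have hMM' : M ⊆ M' := fun d hd => ⟨d, hd, inter_subset_left⟩
      have haM' : a ∈ M' := ⟨RO.top, htopM, inter_subset_right⟩
      have hM'S : M' ∈ S := by
        refine ⟨hMM' hMS.1, ?_, ?_, ?_⟩
        · rintro e ⟨d, hdM, hde⟩
          exact (hcase d hdM).mono hde
        · rintro e ⟨d, hdM, hde⟩ f ⟨d', hd'M, hd'f⟩
          refine ⟨RO.meet d d', hMS.2.2.1 d hdM d' hd'M, ?_⟩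
          show (d.1 ∩ d'.1) ∩ a.1 ⊆ e.1 ∩ f.1
          intro z hz
          exact ⟨hde ⟨hz.1.1, hz.2⟩, hd'f ⟨hz.1.2, hz.2⟩⟩
        · rintro e ⟨d, hdM, hde⟩ f hef
          exact ⟨d, hdM, hde.trans hef⟩
      exact haM (hMmax.2 hM'S hMM' haM')
    · push_neg at hcase
      obtain ⟨d, hdM, hd⟩ := hcase
      apply hMS.2.2.2 d hdM
      intro q hq r hr hra
      have : r ∈ d.1 := Amoeba.dc_of_reg d.2 q hq r hr
      exact Set.eq_empty_iff_forall_notMem.mp hd r ⟨this, hra⟩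
  have hmeet_iff : ∀ a c : RO ε, RO.meet a c ∈ M ↔ a ∈ M ∧ c ∈ M := by
    intro a c
    constructor
    · intro h
      exact ⟨hMS.2.2.2 _ h a inter_subset_left, hMS.2.2.2 _ h c inter_subset_right⟩
    · rintro ⟨h1, h2⟩
      exact hMS.2.2.1 a h1 c h2
  have hcompl_not : ∀ a : RO ε, a ∈ M → RO.compl a ∉ M := by
    intro a haM hcaM
    have h1 := hMS.2.2.1 a haM _ hcaM
    have h2 := hMS.2.1 _ h1
    have : (RO.meet a (RO.compl a)).1 = (∅ : Set (Amoeba ε)) := Amoeba.inter_star a.1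
    rw [this] at h2
    exact Set.not_nonempty_empty h2
  refine ⟨x, ⟨(hmem _).mpr htopM, ?_, ?_⟩, (hmem b).mpr hMS.1⟩
  · intro a c
    by_cases haM : a ∈ M <;> by_cases hcM : c ∈ M <;>
      simp [hxdef, haM, hcM, hmeet_iff a c]
  · intro a
    by_cases haM : a ∈ M
    · simp [hxdef, haM, hcompl_not a haM]
    · simp [hxdef, haM, hcomplM a haM]
namespace RO

instance : SemilatticeInf (RO ε) where
  le a b := a.1 ⊆ b.1
  le_refl a := subset_rfl
  le_trans a b c := Set.Subset.trans
  le_antisymm a b h1 h2 := Subtype.ext (Set.Subset.antisymm h1 h2)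
  inf := meet
  inf_le_left a b := Set.inter_subset_left
  inf_le_right a b := Set.inter_subset_right
  le_inf a b c h1 h2 := Set.subset_inter h1 h2

instance : OrderTop (RO ε) where
  top := top
  le_top a := Set.subset_univ _

theorem le_def {a b : RO ε} : a ≤ b ↔ a.1 ⊆ b.1 := Iff.rfl

end RO

theorem Xset.meet' {x : RO ε → Bool} (hx : x ∈ Xset ε) (a b : RO ε) :
    x (a ⊓ b) = (x a && x b) := hx.2.1 a b

theorem Xset.mono' {x : RO ε → Bool} (hx : x ∈ Xset ε) {a b : RO ε} (hab : a ≤ b)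
    (ha : x a = true) : x b = true := Xset.mono hx hab ha

theorem Xset.finset_inf {α : Type} {x : RO ε → Bool} (hx : x ∈ Xset ε) (I : Finset α)
    (f : α → RO ε) (h : ∀ a ∈ I, x (f a) = true) : x (I.inf f) = true := by
  classical
  induction I using Finset.induction_on with
  | empty => rw [Finset.inf_empty]; exact hx.1
  | insert a s hni ih =>
    rw [Finset.inf_insert, Xset.meet' hx]
    rw [h a (Finset.mem_insert_self a s), ih (fun c hc => h c (Finset.mem_insert_of_mem hc))]
    rfl

/-- The Stone-like space as a type. -/
def StoneX (ε : ENNReal) : Type := {x : RO ε → Bool // x ∈ Xset ε}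

instance : TopologicalSpace (StoneX ε) := by
  unfold StoneX; infer_instance

theorem isClosed_Xset : IsClosed (Xset ε) := by
  have h1 : IsClosed {x : RO ε → Bool | x RO.top = true} :=
    isClosed_eq (continuous_apply _) continuous_const
  have h2 : IsClosed {x : RO ε → Bool | ∀ a b, x (RO.meet a b) = (x a && x b)} := by
    rw [Set.setOf_forall]
    refine isClosed_iInter fun a => ?_
    rw [Set.setOf_forall]
    refine isClosed_iInter fun b => ?_
    exact isClosed_eq (continuous_apply _)
      (Continuous.comp continuous_of_discreteTopology
        ((continuous_apply a).prodMk (continuous_apply b)) :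
        Continuous fun x : RO ε → Bool => ((fun p : Bool × Bool => p.1 && p.2) ∘
          fun x => (x a, x b)) x)
  have h3 : IsClosed {x : RO ε → Bool | ∀ a, x (RO.compl a) = !(x a)} := by
    rw [Set.setOf_forall]
    refine isClosed_iInter fun a => ?_
    exact isClosed_eq (continuous_apply _)
      (Continuous.comp continuous_of_discreteTopology (continuous_apply a) :
        Continuous fun x : RO ε → Bool => (Bool.not ∘ fun x => x a) x)
  have : Xset ε = {x | x RO.top = true} ∩
      ({x | ∀ a b, x (RO.meet a b) = (x a && x b)} ∩ {x | ∀ a, x (RO.compl a) = !(x a)}) := by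
    rfl
  rw [this]
  exact h1.inter (h2.inter h3)

instance : CompactSpace (StoneX ε) :=
  isCompact_iff_compactSpace.mp (isClosed_Xset.isCompact)

instance : T2Space (StoneX ε) := by
  unfold StoneX; infer_instance

/-- Basic clopen subset of the Stone space. -/
def Ehat (c : RO ε) : Set (StoneX ε) := {y | y.1 c = true}

theorem isOpen_Ehat (c : RO ε) : IsOpen (Ehat (ε := ε) c) := by
  have : Ehat (ε := ε) c = (fun y : StoneX ε => y.1 c) ⁻¹' {true} := rfl
  rw [this]
  exact (((continuous_apply c).comp continuous_subtype_val)).isOpen_preimage _ (isOpen_discrete _)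

theorem Ehat_mono {a b : RO ε} (hab : a ≤ b) : Ehat (ε := ε) a ⊆ Ehat b :=
  fun y hy => Xset.mono' y.2 hab hy

theorem Ehat_nonempty {a : RO ε} (ha : a.1.Nonempty) : (Ehat (ε := ε) a).Nonempty := by
  obtain ⟨x, hx, hxa⟩ := exists_ultra a ha
  exact ⟨⟨x, hx⟩, hxa⟩

theorem Ehat_nonempty_val {a : RO ε} (h : (Ehat (ε := ε) a).Nonempty) : a.1.Nonempty := by
  obtain ⟨y, hy⟩ := h
  exact Xset.nonempty_of_true y.2 hy

/-- π-base lemma: every nonempty open subset of the Stone space contains a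
nonempty basic clopen set. -/
theorem exists_basic {O : Set (StoneX ε)} (hO : IsOpen O) {z : StoneX ε} (hz : z ∈ O) :
    ∃ b : RO ε, b.1.Nonempty ∧ Ehat b ⊆ O := by
  classical
  obtain ⟨O', hO', hOeq⟩ := isOpen_induced_iff.mp hO
  have hzO' : z.1 ∈ O' := by rw [← hOeq] at hz; exact hz
  obtain ⟨I, u, hIu, hsub⟩ := isOpen_pi_iff.mp hO' z.1 hzO'
  set f : RO ε → RO ε := fun a => if z.1 a = true then a else RO.compl a with hf
  refine ⟨I.inf f, ?_, ?_⟩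
  · apply Xset.nonempty_of_true z.2
    apply Xset.finset_inf z.2
    intro a _
    by_cases h : z.1 a = true <;> simp [hf, h, z.2.2.2 a]
  · intro y hy
    have hagree : ∀ a ∈ I, y.1 a = z.1 a := by
      intro a haI
      have h1 : y.1 (f a) = true :=
        Xset.mono' y.2 (Finset.inf_le haI) hy
      by_cases h : z.1 a = true
      · have h2 : y.1 a = true := by simpa [hf, h] using h1
        rw [h2, h]
      · have hz' : z.1 a = false := Bool.eq_false_iff.mpr h
        have h2 : y.1 (RO.compl a) = true := by simpa [hf, h] using h1
        rw [y.2.2.2 a, Bool.not_eq_true'] at h2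
        rw [h2, hz']
    rw [← hOeq]
    apply hsub
    intro a haI
    rw [hagree a haI]
    exact (hIu a haI).2

/-- The canonical regular open set determined by a condition. -/
def E (p : Amoeba ε) : RO ε :=
  ⟨Amoeba.ro {r : Amoeba ε | p.1 ⊆ r.1},
    Amoeba.ro_idem (fun q hq r hr => hq.trans hr)⟩

theorem mem_E (p : Amoeba ε) : p ∈ (E p).1 :=
  Amoeba.subset_ro (fun q hq r hr => Set.Subset.trans hq hr) (show p.1 ⊆ p.1 from subset_rfl)

theorem E_le {p : Amoeba ε} {b : RO ε} (hp : p ∈ b.1) : E p ≤ b := by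
  have hdc : Amoeba.DC b.1 := Amoeba.dc_of_reg b.2
  have h1 : {r : Amoeba ε | p.1 ⊆ r.1} ⊆ b.1 := fun r hr => hdc p hp r hr
  calc (E p).1 ⊆ Amoeba.ro b.1 := Amoeba.ro_mono h1
    _ = b.1 := b.2

theorem incompat_of_disjoint {p q : Amoeba ε}
    (h : Ehat (E p) ∩ Ehat (E q) = ∅) :
    ¬∃ r : Amoeba ε, p.1 ⊆ r.1 ∧ q.1 ⊆ r.1 := by
  rintro ⟨r, hrp, hrq⟩
  have h1 : r ∈ ((E p) ⊓ (E q)).1 := by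
    constructor
    · exact Amoeba.subset_ro (fun a ha c hc => ha.trans hc) hrp
    · exact Amoeba.subset_ro (fun a ha c hc => ha.trans hc) hrq
  obtain ⟨y, hy⟩ := Ehat_nonempty (a := (E p) ⊓ (E q)) ⟨r, h1⟩
  have hyp : y ∈ Ehat (ε := ε) (E p) := Xset.mono' y.2 inf_le_left hy
  have hyq : y ∈ Ehat (ε := ε) (E q) := Xset.mono' y.2 inf_le_right hy
  rw [Set.eq_empty_iff_forall_notMem] at h
  exact h y ⟨hyp, hyq⟩
/-- Around each point of an open set there is a rational interval whose closure
is inside the set. -/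
theorem exists_rat_interval {U : Set ℝ} (hU : IsOpen U) {a : ℝ} (ha : a ∈ U) :
    ∃ q : ℚ × ℚ, a ∈ Ioo (q.1 : ℝ) q.2 ∧ closure (Ioo (q.1 : ℝ) q.2) ⊆ U := by
  obtain ⟨δ, hδ, hball⟩ := Metric.isOpen_iff.mp hU a ha
  rw [Real.ball_eq_Ioo] at hball
  obtain ⟨q1, hq11, hq12⟩ := exists_rat_btwn (show a - δ < a by linarith)
  obtain ⟨q2, hq21, hq22⟩ := exists_rat_btwn (show a < a + δ by linarith)
  refine ⟨(q1, q2), ⟨hq12, hq21⟩, ?_⟩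
  rw [closure_Ioo (by exact_mod_cast ne_of_lt (hq12.trans hq21))]
  intro t ht
  exact hball ⟨lt_of_lt_of_le hq11 ht.1, lt_of_le_of_lt ht.2 hq22⟩

variable (ε)

/-- union of a finite set of rational intervals -/
def qU (L : Finset (ℚ × ℚ)) : Set ℝ := ⋃ q ∈ L, Ioo (q.1 : ℝ) q.2

theorem isOpen_qU (L : Finset (ℚ × ℚ)) : IsOpen (qU L) :=
  isOpen_biUnion fun _ _ => isOpen_Ioo

theorem measurable_qU (L : Finset (ℚ × ℚ)) : MeasurableSet (qU L) :=
  (isOpen_qU L).measurableSet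

variable {ε}

/-- The code of an amoeba condition. -/
def GoodCode (U : Amoeba ε) (c : Finset (ℚ × ℚ) × ℚ) : Prop :=
  0 < c.2 ∧ (∀ q ∈ c.1, Ioo (q.1 : ℝ) q.2 ⊆ U.1) ∧
    volume (U.1 \ qU c.1) < ENNReal.ofReal c.2 ∧
    volume U.1 + ENNReal.ofReal c.2 < ε

theorem exists_code (hεtop : ε ≠ ⊤) (U : Amoeba ε) : ∃ c, GoodCode U c := by
  classical
  obtain ⟨hUopen, hUvol⟩ := U.2
  have hUfin : volume U.1 ≠ ⊤ := (hUvol.trans_le le_top).ne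
  -- a rational gap
  have htR : (volume U.1).toReal < ε.toReal :=
    ENNReal.toReal_lt_toReal hUfin hεtop |>.mpr hUvol
  obtain ⟨s, hs0, hs⟩ := exists_rat_btwn (show (0:ℝ) < ε.toReal - (volume U.1).toReal by linarith)
  have hs0' : (0:ℝ) < (s:ℝ) := hs0
  have hs0q : (0:ℚ) < s := by exact_mod_cast hs0
  have hsum : volume U.1 + ENNReal.ofReal s < ε := by
    calc volume U.1 + ENNReal.ofReal (s:ℝ)
        = ENNReal.ofReal ((volume U.1).toReal + (s:ℝ)) := by
          rw [ENNReal.ofReal_add ENNReal.toReal_nonneg hs0'.le, ENNReal.ofReal_toReal hUfin]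
      _ < ENNReal.ofReal ε.toReal := by
          rw [ENNReal.ofReal_lt_ofReal_iff_of_nonneg (by positivity)]
          linarith
      _ = ε := ENNReal.ofReal_toReal hεtop
  by_cases hsmall : volume U.1 < ENNReal.ofReal s
  · refine ⟨(∅, s), hs0q, by simp, ?_, hsum⟩
    exact lt_of_le_of_lt (measure_mono Set.diff_subset) hsmall
  · push_neg at hsmall
    -- U is covered by rational intervals inside it
    set SU : Set (ℚ × ℚ) := {q | Ioo (q.1 : ℝ) q.2 ⊆ U.1} with hSU
    have hcover : U.1 = ⋃ q ∈ SU, Ioo (q.1 : ℝ) q.2 := by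
      apply Set.Subset.antisymm
      · intro a ha
        obtain ⟨q, haq, hq⟩ := exists_rat_interval hUopen ha
        exact Set.mem_biUnion (show q ∈ SU from (subset_closure).trans hq) haq
      · exact Set.iUnion₂_subset fun q hq => hq
    have hSUne : SU.Nonempty := by
      by_contra h
      rw [Set.not_nonempty_iff_eq_empty] at h
      rw [h] at hcover
      simp only [Set.mem_empty_iff_false, Set.iUnion_of_empty, Set.iUnion_empty,
        Set.iUnion_false, Set.biUnion_empty] at hcover
      rw [hcover] at hsmall
      simp only [measure_empty] at hsmall
      exact absurd (lt_of_lt_of_le (ENNReal.ofReal_pos.mpr hs0') hsmall) (lt_irrefl _)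
    obtain ⟨f, hf⟩ := (Set.to_countable SU).exists_eq_range hSUne
    set W : ℕ → Set ℝ := fun n => qU ((Finset.range (n+1)).image f) with hW
    have hWU : ∀ n, W n ⊆ U.1 := by
      intro n t ht
      simp only [hW, qU, Set.mem_iUnion] at ht
      obtain ⟨q, hq, htq⟩ := ht
      rw [Finset.mem_image] at hq
      obtain ⟨k, -, rfl⟩ := hq
      have : f k ∈ SU := by rw [hf]; exact ⟨k, rfl⟩
      exact this htq
    have hWmono : Monotone W := by
      intro m n hmn t ht
      simp only [hW, qU, Set.mem_iUnion] at ht ⊢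
      obtain ⟨q, hq, htq⟩ := ht
      refine ⟨q, ?_, htq⟩
      rw [Finset.mem_image] at hq ⊢
      obtain ⟨k, hk, rfl⟩ := hq
      exact ⟨k, Finset.mem_range.mpr (lt_of_lt_of_le (Finset.mem_range.mp hk) (by omega)), rfl⟩
    have hWun : U.1 = ⋃ n, W n := by
      rw [hcover, hf]
      apply Set.Subset.antisymm
      · intro t ht
        simp only [Set.mem_iUnion] at ht ⊢
        obtain ⟨q, ⟨k, rfl⟩, htq⟩ := by
          simpa only [Set.mem_range, Set.mem_iUnion] using ht
        exact ⟨k, by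
          simp only [hW, qU, Set.mem_iUnion]
          exact ⟨f k, Finset.mem_image_of_mem f (Finset.mem_range.mpr (by omega)), htq⟩⟩
      · intro t ht
        simp only [Set.mem_iUnion] at ht ⊢
        obtain ⟨n, hn⟩ := ht
        simp only [hW, qU, Set.mem_iUnion] at hn
        obtain ⟨q, hq, htq⟩ := hn
        rw [Finset.mem_image] at hq
        obtain ⟨k, -, rfl⟩ := hq
        exact ⟨f k, Set.mem_range_self k, htq⟩
    have hsup : volume U.1 = ⨆ n, volume (W n) := by
      rw [hWun]
      exact (hWmono.directed_le).measure_iUnion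
    have hlt : volume U.1 - ENNReal.ofReal s < volume U.1 := by
      apply ENNReal.sub_lt_self hUfin
      · intro h0
        rw [h0] at hsmall
        exact absurd (lt_of_lt_of_le (ENNReal.ofReal_pos.mpr hs0') hsmall) (lt_irrefl _)
      · exact (ENNReal.ofReal_pos.mpr hs0').ne'
    rw [hsup] at hlt
    obtain ⟨n, hn⟩ := lt_iSup_iff.mp hlt
    rw [← hsup] at hn
    refine ⟨((Finset.range (n+1)).image f, s), hs0q, ?_, ?_, hsum⟩
    · intro q hq
      rw [Finset.mem_image] at hq
      obtain ⟨k, -, rfl⟩ := hq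
      have : f k ∈ SU := by rw [hf]; exact ⟨k, rfl⟩
      exact this
    · have hWn : volume (U.1 \ W n) = volume U.1 - volume (W n) := by
        apply measure_diff (hWU n) (measurable_qU _).nullMeasurableSet
        exact ((measure_mono (hWU n)).trans_lt hUvol).trans_le le_top |>.ne
      show volume (U.1 \ W n) < ENNReal.ofReal s
      rw [hWn]
      have hWle : volume (W n) ≤ volume U.1 := measure_mono (hWU n)
      have hWfin : volume (W n) ≠ ⊤ := ((lt_of_le_of_lt hWle hUvol).trans_le le_top).ne
      rw [ENNReal.sub_lt_iff_lt_right hWfin hWle]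
      rw [ENNReal.sub_lt_iff_lt_right ENNReal.ofReal_ne_top hsmall] at hn
      rwa [add_comm] at hn
theorem compat_of_code_eq (hεtop : ε ≠ ⊤) {U U' : Amoeba ε} {c : Finset (ℚ × ℚ) × ℚ}
    (h : GoodCode U c) (h' : GoodCode U' c) :
    ∃ r : Amoeba ε, U.1 ⊆ r.1 ∧ U'.1 ⊆ r.1 := by
  obtain ⟨-, hL, -, hm⟩ := h
  obtain ⟨-, hL', hd', -⟩ := h'
  have hVU : qU c.1 ⊆ U.1 := Set.iUnion₂_subset hL
  have hunion : U.1 ∪ U'.1 ⊆ U.1 ∪ (U'.1 \ qU c.1) := by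
    intro t ht
    rcases ht with ht | ht
    · exact Or.inl ht
    · by_cases htV : t ∈ qU c.1
      · exact Or.inl (hVU htV)
      · exact Or.inr ⟨ht, htV⟩
  have hμ : volume (U.1 ∪ U'.1) < ε := by
    calc volume (U.1 ∪ U'.1) ≤ volume (U.1 ∪ (U'.1 \ qU c.1)) := measure_mono hunion
      _ ≤ volume U.1 + volume (U'.1 \ qU c.1) := measure_union_le _ _
      _ < volume U.1 + ENNReal.ofReal c.2 :=
          ENNReal.add_lt_add_left ((U.2.2.trans_le le_top).ne) hd'
      _ < ε := hm
  exact ⟨⟨U.1 ∪ U'.1, U.2.1.union U'.2.1, hμ⟩, Set.subset_union_left, Set.subset_union_right⟩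

/-- ccc of the Stone space. -/
theorem stone_ccc (hεtop : ε ≠ ⊤) :
    ∀ s : Set (Set (StoneX ε)), (∀ u ∈ s, IsOpen u) → s.PairwiseDisjoint id → s.Countable := by
  classical
  intro s hopen hdisj
  have key : ∀ O : ↥(s \ {(∅ : Set (StoneX ε))}),
      ∃ p : Amoeba ε, Ehat (E p) ⊆ O.1 ∧ (Ehat (ε := ε) (E p)).Nonempty := by
    rintro ⟨O, hOs, hOne⟩
    have hne : O.Nonempty := Set.nonempty_iff_ne_empty.mpr hOne
    obtain ⟨z, hz⟩ := hne
    obtain ⟨b, hbne, hbsub⟩ := exists_basic (hopen O hOs) hz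
    obtain ⟨p, hp⟩ := hbne
    refine ⟨p, (Ehat_mono (E_le hp)).trans hbsub, ?_⟩
    refine Ehat_nonempty ⟨p, mem_E p⟩
  choose P hP1 hP2 using key
  choose C hC using fun O => exists_code hεtop (P O)
  have hCinj : Function.Injective C := by
    intro O O' hOO'
    by_contra hne
    have hOne : O.1 ≠ O'.1 := fun h => hne (Subtype.ext h)
    have hd : Disjoint O.1 O'.1 := hdisj O.2.1 O'.2.1 hOne
    have hEd : Ehat (E (P O)) ∩ Ehat (E (P O')) = ∅ := by
      apply Set.eq_empty_of_subset_empty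
      intro y hy
      exact absurd (Set.mem_inter ((hP1 O) hy.1) ((hP1 O') hy.2))
        (by rw [Set.disjoint_iff_inter_eq_empty] at hd
            rw [hd]; exact fun h => h)
    have hincompat := incompat_of_disjoint hEd
    exact hincompat (compat_of_code_eq hεtop (hC O)
      (by rw [hOO']; exact hC O'))
  have : Countable ↥(s \ {(∅ : Set (StoneX ε))}) := Function.Injective.countable hCinj
  have h1 : (s \ {(∅ : Set (StoneX ε))}).Countable := Set.countable_coe_iff.mp this
  have : s ⊆ (s \ {(∅ : Set (StoneX ε))}) ∪ {(∅ : Set (StoneX ε))} := by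
    intro O hO
    by_cases h : O = ∅
    · exact Or.inr h
    · exact Or.inl ⟨hO, h⟩
  exact Set.Countable.mono this (h1.union (Set.countable_singleton _))

/-- Density: every null set can be absorbed into any condition. -/
theorem dense_cover (hεtop : ε ≠ ⊤) {N : Set ℝ} (hN : volume N = 0) (p : Amoeba ε) :
    ∃ d : Amoeba ε, p.1 ⊆ d.1 ∧ N ⊆ d.1 := by
  have hδ : (0 : ENNReal) < ε - volume p.1 := tsub_pos_of_lt p.2.2
  obtain ⟨V, hNV, hVopen, hVvol⟩ := exists_isOpen_lt_of_lt N _ (hN ▸ hδ)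
  have hpfin : volume p.1 ≠ ⊤ := ((p.2.2).trans_le le_top).ne
  have hμ : volume (p.1 ∪ V) < ε := by
    calc volume (p.1 ∪ V) ≤ volume p.1 + volume V := measure_union_le _ _
      _ < volume p.1 + (ε - volume p.1) := ENNReal.add_lt_add_left hpfin hVvol
      _ = ε := add_tsub_cancel_of_le p.2.2.le
  exact ⟨⟨p.1 ∪ V, p.2.1.union hVopen, hμ⟩, Set.subset_union_left,
    hNV.trans Set.subset_union_right⟩

/-- Conditions containing the closure of a rational interval. -/
def Oq (q : ℚ × ℚ) : Set (Amoeba ε) := {U | closure (Ioo (q.1 : ℝ) q.2) ⊆ U.1}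

theorem dc_Oq (q : ℚ × ℚ) : Amoeba.DC (Oq (ε := ε) q) :=
  fun p hp r hr => hp.trans hr

def Rq (q : ℚ × ℚ) : RO ε := ⟨Amoeba.ro (Oq q), Amoeba.ro_idem (dc_Oq q)⟩

theorem E_le_Rq {U : Amoeba ε} {q : ℚ × ℚ} (h : closure (Ioo (q.1 : ℝ) q.2) ⊆ U.1) :
    E U ≤ Rq q :=
  Amoeba.ro_mono (fun r hr => h.trans hr)

theorem dc_biInter (F : Finset (ℚ × ℚ)) :
    Amoeba.DC (⋂ q ∈ F, Oq (ε := ε) q) := by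
  intro p hp r hr
  simp only [Set.mem_iInter] at hp ⊢
  intro q hq
  exact dc_Oq q p (hp q hq) r hr

theorem inf_Rq_carrier (F : Finset (ℚ × ℚ)) :
    (F.inf (Rq (ε := ε))).1 = Amoeba.ro (⋂ q ∈ F, Oq q) := by
  classical
  induction F using Finset.induction_on with
  | empty =>
    rw [Finset.inf_empty]
    have h0 : (⋂ q ∈ (∅ : Finset (ℚ × ℚ)), Oq (ε := ε) q) = Set.univ := by simp
    rw [h0, Amoeba.ro_univ]
    rfl
  | insert a t hni ih =>
    rw [Finset.inf_insert]
    show Amoeba.ro (Oq a) ∩ (t.inf Rq).1 = _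
    rw [ih, ← Amoeba.ro_inter (dc_Oq a) (dc_biInter t)]
    have heq : Oq (ε := ε) a ∩ (⋂ q ∈ t, Oq q) = ⋂ q ∈ insert a t, Oq (ε := ε) q := by
      ext r
      simp only [Set.mem_inter_iff, Set.mem_iInter, Finset.mem_insert]
      constructor
      · rintro ⟨h1, h2⟩ q hq
        rcases hq with rfl | hq
        · exact h1
        · exact h2 q hq
      · intro h
        exact ⟨h a (Or.inl rfl), fun q hq => h q (Or.inr hq)⟩
    rw [heq]

theorem exists_amoeba_of_Rq {x : StoneX ε} (F : Finset (ℚ × ℚ))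
    (h : ∀ q ∈ F, x.1 (Rq q) = true) :
    ∃ U : Amoeba ε, ∀ q ∈ F, closure (Ioo (q.1 : ℝ) q.2) ⊆ U.1 := by
  have hx : x.1 (F.inf Rq) = true := by
    have := Xset.finset_inf x.2 F (Rq (ε := ε)) h
    simpa using this
  have hne : (F.inf (Rq (ε := ε))).1.Nonempty := Xset.nonempty_of_true x.2 hx
  rw [inf_Rq_carrier] at hne
  obtain ⟨U, hU⟩ := Amoeba.nonempty_of_ro hne
  simp only [Set.mem_iInter] at hU
  exact ⟨U, hU⟩
/-- The generic open set determined by a point of the Stone space has measure ≤ ε. -/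
theorem measure_W_le (x : StoneX ε) :
    volume (⋃ q ∈ {q : ℚ × ℚ | x.1 (Rq q) = true}, Ioo (q.1 : ℝ) q.2) ≤ ε := by
  classical
  set T : Set (ℚ × ℚ) := {q | x.1 (Rq q) = true} with hT
  rcases T.eq_empty_or_nonempty with h | h
  · rw [h]
    simp
  · obtain ⟨f, hf⟩ := (Set.to_countable T).exists_eq_range h
    set W : ℕ → Set ℝ := fun n => qU ((Finset.range (n+1)).image f) with hW
    have hWmono : Monotone W := by
      intro m n hmn t ht
      simp only [hW, qU, Set.mem_iUnion] at ht ⊢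
      obtain ⟨q, hq, htq⟩ := ht
      refine ⟨q, ?_, htq⟩
      rw [Finset.mem_image] at hq ⊢
      obtain ⟨k, hk, rfl⟩ := hq
      exact ⟨k, Finset.mem_range.mpr (lt_of_lt_of_le (Finset.mem_range.mp hk) (by omega)), rfl⟩
    have hun : (⋃ q ∈ T, Ioo (q.1 : ℝ) q.2) = ⋃ n, W n := by
      rw [hf]
      apply Set.Subset.antisymm
      · intro t ht
        simp only [Set.mem_iUnion] at ht ⊢
        obtain ⟨q, ⟨k, rfl⟩, htq⟩ := by
          simpa only [Set.mem_range, Set.mem_iUnion] using ht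
        exact ⟨k, by
          simp only [hW, qU, Set.mem_iUnion]
          exact ⟨f k, Finset.mem_image_of_mem f (Finset.mem_range.mpr (by omega)), htq⟩⟩
      · intro t ht
        simp only [Set.mem_iUnion] at ht ⊢
        obtain ⟨n, hn⟩ := ht
        simp only [hW, qU, Set.mem_iUnion] at hn
        obtain ⟨q, hq, htq⟩ := hn
        rw [Finset.mem_image] at hq
        obtain ⟨k, -, rfl⟩ := hq
        exact ⟨f k, Set.mem_range_self k, htq⟩
    rw [hun, hWmono.directed_le.measure_iUnion]
    apply iSup_le
    intro n
    have hFT : ∀ q ∈ (Finset.range (n+1)).image f, x.1 (Rq q) = true := by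
      intro q hq
      rw [Finset.mem_image] at hq
      obtain ⟨k, -, rfl⟩ := hq
      have : f k ∈ T := by rw [hf]; exact ⟨k, rfl⟩
      exact this
    obtain ⟨U, hU⟩ := exists_amoeba_of_Rq _ hFT
    have hsub : W n ⊆ U.1 := by
      apply Set.iUnion₂_subset
      intro q hq
      exact subset_closure.trans (hU q hq)
    exact ((measure_mono hsub).trans_lt U.2.2).le

end MAProof

/-- under MA, the union of strictly fewer than continuum Lebesgue null
subsets of `[0,1]` is Lebesgue null. -/
theorem union_lt_continuum_null_sets_null (hMA : MartinsAxiom)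
    (ι : Type) (hι : Cardinal.mk ι < Cardinal.continuum)
    (A : ι → Set ℝ) (hsub : ∀ i, A i ⊆ Set.Icc (0:ℝ) 1)
    (hnull : ∀ i, volume (A i) = 0) :
    volume (⋃ i, A i) = 0 := by
  have key : ∀ εr : NNReal, 0 < εr → volume (⋃ i, A i) ≤ (εr : ENNReal) := by
    intro εr hεr
    set ε : ENNReal := (εr : ENNReal) with hε
    have hε0 : (0 : ENNReal) < ε := by rw [hε]; exact_mod_cast hεr
    have hεtop : ε ≠ ⊤ := ENNReal.coe_ne_top
    have p0 : Amoeba ε := ⟨∅, isOpen_empty, by simpa using hε0⟩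
    set V : ι → Set (StoneX ε) :=
      fun i => ⋃ (U : Amoeba ε) (_ : A i ⊆ U.1), Ehat (E U) with hV
    have hVopen : ∀ i, IsOpen (V i) :=
      fun i => isOpen_iUnion fun U => isOpen_iUnion fun _ => isOpen_Ehat _
    set N : ι → Set (StoneX ε) := fun i => (V i)ᶜ with hN
    have hNclosed : ∀ i, IsClosed (N i) := fun i => (hVopen i).isClosed_compl
    have hND : ∀ i, IsNowhereDense (N i) := by
      intro i
      rw [(hNclosed i).isNowhereDense_iff]
      rw [Set.eq_empty_iff_forall_notMem]
      intro z hz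
      obtain ⟨b, hbne, hbsub⟩ := exists_basic isOpen_interior hz
      obtain ⟨p, hp⟩ := hbne
      obtain ⟨d, hpd, hAd⟩ := dense_cover hεtop (hnull i) p
      have hdb : d ∈ b.1 := Amoeba.dc_of_reg b.2 p hp d hpd
      obtain ⟨y, hy⟩ := Ehat_nonempty (a := E d) ⟨d, mem_E d⟩
      have hyN : y ∈ N i := interior_subset (hbsub (Ehat_mono (E_le hdb) hy))
      apply hyN
      rw [hV]
      exact Set.mem_iUnion.mpr ⟨d, Set.mem_iUnion.mpr ⟨hAd, hy⟩⟩
    have hXne : Nonempty (StoneX ε) := by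
      obtain ⟨y, -⟩ := Ehat_nonempty (a := RO.top) ⟨p0, trivial⟩
      exact ⟨y⟩
    have hMAres := hMA (StoneX ε) hXne inferInstance inferInstance
      (stone_ccc hεtop) ι hι N hND
    obtain ⟨z, hz⟩ := (Set.ne_univ_iff_exists_notMem _).mp hMAres
    have hz' : ∀ i, z ∈ V i := by
      intro i
      by_contra h
      exact hz (Set.mem_iUnion.mpr ⟨i, h⟩)
    have hcov : (⋃ i, A i) ⊆ ⋃ q ∈ {q : ℚ × ℚ | z.1 (Rq q) = true}, Ioo (q.1 : ℝ) q.2 := by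
      intro a ha
      obtain ⟨i, hai⟩ := Set.mem_iUnion.mp ha
      have hzi := hz' i
      rw [hV] at hzi
      obtain ⟨U, hU⟩ := Set.mem_iUnion.mp hzi
      obtain ⟨hAU, hzU⟩ := Set.mem_iUnion.mp hU
      obtain ⟨q, haq, hqU⟩ := exists_rat_interval U.2.1 (hAU hai)
      have hq : z.1 (Rq q) = true := Xset.mono' z.2 (E_le_Rq hqU) hzU
      exact Set.mem_biUnion hq haq
    calc volume (⋃ i, A i)
        ≤ volume (⋃ q ∈ {q : ℚ × ℚ | z.1 (Rq q) = true}, Ioo (q.1 : ℝ) q.2) :=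
          measure_mono hcov
      _ ≤ ε := measure_W_le z
  refine le_antisymm ?_ zero_le
  refine ENNReal.le_of_forall_pos_le_add ?_
  intro εr hεr _
  rw [zero_add]
  exact key εr hεr
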